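/- Let H be a Hermitian matrix on a finite-dimensional Hilbert space ⊕_{x∈Q} ℋ (Q finite, dim ℋ < ∞) decomposed as a block matrix, and let Q = Q₁ ∪ Q₂ be a disjoint partition. Let H' be the block-diagonal matrix obtained by setting all blocks p_y H i_x with x ∈ Q₁, y ∈ Q₂ or x ∈ Q₂, y ∈ Q₁ to zero. If H has finite range R (p_y H i_x = 0 whenever dist(x,y) > R), then rank(H - H') ≤ 2 · dim(ℋ) · #{x ∈ Q₁ : dist(x, Q₂) ≤ R} + 2 · dim(ℋ) · #{x ∈ Q₂ : dist(x, Q₁) ≤ R}. -/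

import Mathlib

open Finset

/-- Rank estimate for the off-diagonal part of a finite-range block operator.
`H` is a Hermitian block matrix on `⊕_{x ∈ Q} ℋ` with `ℋ = ℂ^n`, `Q = Q₁ ∪ Q₂` a
disjoint partition, and `H'` the block-diagonal part of `H` with respect to this
partition. If `H` has hopping range `R`, then the rank of `H - H'` is bounded by
`2 n` times the number of points of `Q₁` within distance `R` of `Q₂`, plus
`2 n` times the number of points of `Q₂` within distance `R` of `Q₁`. -/
theorem stmt3 {d n : ℕ} (R : ℝ) (Q Q₁ Q₂ : Finset (Fin d → ℤ))
    (hpart : Q₁ ∪ Q₂ = Q) (hdisj : Disjoint Q₁ Q₂)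
    (H H' : Matrix (Q × Fin n) (Q × Fin n) ℂ) (hH : H.IsHermitian)
    (hrange : ∀ x y : Q, R < dist (x : Fin d → ℤ) (y : Fin d → ℤ) →
      ∀ a b : Fin n, H (y, a) (x, b) = 0)
    (hH' : ∀ (x y : Q) (a b : Fin n),
      H' (y, a) (x, b) =
        if ((x : Fin d → ℤ) ∈ Q₁ ∧ (y : Fin d → ℤ) ∈ Q₁) ∨
           ((x : Fin d → ℤ) ∈ Q₂ ∧ (y : Fin d → ℤ) ∈ Q₂)
        then H (y, a) (x, b) else 0) :
    (H - H').rank ≤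
      2 * n * (Q₁.filter (fun x => ∃ y ∈ Q₂, dist x y ≤ R)).card
        + 2 * n * (Q₂.filter (fun x => ∃ y ∈ Q₁, dist x y ≤ R)).card := by
  classical
  set B₁ := Q₁.filter (fun x => ∃ y ∈ Q₂, dist x y ≤ R) with hB₁
  set B₂ := Q₂.filter (fun x => ∃ y ∈ Q₁, dist x y ≤ R) with hB₂
  set M := H - H' with hM
  set w : Q × Fin n → ℂ := fun p => if (p.1 : Fin d → ℤ) ∈ B₁ ∪ B₂ then 1 else 0 with hw
  -- rows of M outside the boundary vanish
  have hrow : ∀ (y : Q) (a : Fin n), (y : Fin d → ℤ) ∉ B₁ ∪ B₂ →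
      ∀ (x : Q) (b : Fin n), M (y, a) (x, b) = 0 := by
    intro y a hy x b
    have hyQ : (y : Fin d → ℤ) ∈ Q₁ ∪ Q₂ := hpart ▸ y.2
    have hxQ : (x : Fin d → ℤ) ∈ Q₁ ∪ Q₂ := hpart ▸ x.2
    simp only [Finset.mem_union, not_or] at hy
    have hMval : M (y, a) (x, b) =
        if ((x : Fin d → ℤ) ∈ Q₁ ∧ (y : Fin d → ℤ) ∈ Q₁) ∨
           ((x : Fin d → ℤ) ∈ Q₂ ∧ (y : Fin d → ℤ) ∈ Q₂)
        then 0 else H (y, a) (x, b) := by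
      simp only [hM, Matrix.sub_apply, hH']
      split <;> simp
    rw [hMval]
    split
    · rfl
    · rename_i hcond
      rcases Finset.mem_union.1 hyQ with hy1 | hy2
      · rcases Finset.mem_union.1 hxQ with hx1 | hx2
        · exact absurd (Or.inl ⟨hx1, hy1⟩) hcond
        · -- y ∈ Q₁, x ∈ Q₂, y not in B₁ ⇒ far
          have : ¬ ∃ z ∈ Q₂, dist (y : Fin d → ℤ) z ≤ R := by
            intro hex
            exact hy.1 (Finset.mem_filter.2 ⟨hy1, hex⟩)
          push_neg at this
          have := this _ hx2
          exact hrange x y (by rwa [dist_comm]) a b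
      · rcases Finset.mem_union.1 hxQ with hx1 | hx2
        · have : ¬ ∃ z ∈ Q₁, dist (y : Fin d → ℤ) z ≤ R := by
            intro hex
            exact hy.2 (Finset.mem_filter.2 ⟨hy2, hex⟩)
          push_neg at this
          have := this _ hx1
          exact hrange x y (by rwa [dist_comm]) a b
        · exact absurd (Or.inr ⟨hx2, hy2⟩) hcond
  -- M = diagonal w * M
  have hfact : M = Matrix.diagonal w * M := by
    ext p q
    rw [Matrix.diagonal_mul]
    by_cases hp : (p.1 : Fin d → ℤ) ∈ B₁ ∪ B₂
    · simp only [hw, if_pos hp, one_mul]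
    · have := hrow p.1 p.2 hp q.1 q.2
      simp only [hw, if_neg hp, zero_mul]
      simpa using this
  have hle : M.rank ≤ (Matrix.diagonal w).rank := by
    conv_lhs => rw [hfact]
    exact Matrix.rank_mul_le_left _ _
  rw [Matrix.rank_diagonal] at hle
  -- count the nonzero diagonal entries
  have hcount : Fintype.card {p : Q × Fin n // w p ≠ 0} ≤ (B₁.card + B₂.card) * n := by
    have hcard : Fintype.card {p : Q × Fin n // w p ≠ 0} =
        (Finset.univ.filter (fun p : Q × Fin n => w p ≠ 0)).card :=
      Fintype.card_subtype _
    rw [hcard]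
    have hinj : ∀ p ∈ Finset.univ.filter (fun p : Q × Fin n => w p ≠ 0),
        ((p.1 : Fin d → ℤ), p.2) ∈ (B₁ ∪ B₂) ×ˢ (Finset.univ : Finset (Fin n)) := by
      intro p hp
      simp only [Finset.mem_filter, hw] at hp
      have : (p.1 : Fin d → ℤ) ∈ B₁ ∪ B₂ := by
        by_contra h
        exact hp.2 (by simp [h])
      simp only [Finset.mem_product, Finset.mem_univ, and_true]
      exact this
    calc (Finset.univ.filter (fun p : Q × Fin n => w p ≠ 0)).card
        ≤ ((B₁ ∪ B₂) ×ˢ (Finset.univ : Finset (Fin n))).card := by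
          apply Finset.card_le_card_of_injOn (fun p => ((p.1 : Fin d → ℤ), p.2)) (fun p hp => hinj p hp)
          intro p _ q _ h
          simp only [Prod.mk.injEq] at h
          exact Prod.ext (Subtype.ext h.1) h.2
      _ = (B₁ ∪ B₂).card * n := by rw [Finset.card_product, Finset.card_univ, Fintype.card_fin]
      _ ≤ (B₁.card + B₂.card) * n :=
          Nat.mul_le_mul_right _ (Finset.card_union_le _ _)
  have := le_trans hle hcount
  calc M.rank ≤ (B₁.card + B₂.card) * n := this
    _ ≤ 2 * n * B₁.card + 2 * n * B₂.card := by ring_nf; nlinarith
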